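/- Let n ≥ 8 be an integer and suppose the complete graph K_n admits a connected and complete k-edge-coloring. Then k ≤ ⌊M⌋, where M is the maximum over all positive integers x of min{f_n(x), g_n(x)}, with f_n(x) = n(n-1)/(2x) and g_n(x) = (x+1)(n - x - 1/2). -/

import Mathlib

open SimpleGraph

/-- The subgraph of `G` formed by the edges of color `i`. -/
def colorClassSubgraph {V : Type*} {k : ℕ} (G : SimpleGraph V) (c : Sym2 V → Fin k)
    (i : Fin k) : G.Subgraph where
  verts := {v | ∃ w, G.Adj v w ∧ c s(v, w) = i}
  Adj v w := G.Adj v w ∧ c s(v, w) = i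
  adj_sub h := h.1
  edge_vert h := ⟨_, h⟩
  symm := ⟨fun v w h => ⟨h.1.symm, by rw [Sym2.eq_swap]; exact h.2⟩⟩

/-- `c` is a complete edge-coloring of `G` with `k` colors: every color is used on some
edge, and every two distinct colors appear on a pair of edges sharing a vertex. -/
def IsCompleteEdgeColoring {V : Type*} {k : ℕ} (G : SimpleGraph V)
    (c : Sym2 V → Fin k) : Prop :=
  (∀ i : Fin k, ∃ e ∈ G.edgeSet, c e = i) ∧
  ∀ i j : Fin k, i ≠ j →
    ∃ u v w : V, G.Adj u v ∧ G.Adj u w ∧ c s(u, v) = i ∧ c s(u, w) = j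

/-- `c` is a connected edge-coloring: each color class induces a connected subgraph. -/
def IsConnectedEdgeColoring {V : Type*} {k : ℕ} (G : SimpleGraph V)
    (c : Sym2 V → Fin k) : Prop :=
  ∀ i : Fin k, (colorClassSubgraph G c i).Connected

lemma sym2_exists_eq_mk {α : Type*} (e : Sym2 α) : ∃ a b, e = s(a, b) :=
  Sym2.ind (fun a b => ⟨a, b, rfl⟩) e

open Classical in
lemma exists_cross_edge' {W : Type*} {H : SimpleGraph W} (S' : Set W) :
    ∀ {u v : W} (_ : H.Walk u v), u ∈ S' → v ∉ S' →
      ∃ a b, H.Adj a b ∧ a ∈ S' ∧ b ∉ S'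
  | _, _, SimpleGraph.Walk.nil, hu, hv => absurd hu hv
  | _, _, @SimpleGraph.Walk.cons _ _ _ b _ h q, hu, hv =>
      if hw : b ∈ S' then exists_cross_edge' S' q hw hv
      else ⟨_, _, h, hu, hw⟩

lemma connected_card_vert_le {W : Type*} [Fintype W] {H : SimpleGraph W}
    (hc : H.Connected) (F : Finset (Sym2 W)) (hF : ∀ a b, H.Adj a b → s(a, b) ∈ F) :
    Fintype.card W ≤ F.card + 1 := by
  classical
  obtain ⟨root⟩ := hc.nonempty
  have key : ∀ v : W, ∃ w : W, v ≠ root → H.Adj v w ∧ H.dist w root < H.dist v root := by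
    intro v
    by_cases hv : v = root
    · exact ⟨v, fun h => absurd hv h⟩
    · obtain ⟨p, hp⟩ := (hc.preconnected v root).exists_walk_length_eq_dist
      have hd : 0 < H.dist v root := hc.pos_dist_of_ne hv
      have hnil : ¬ p.Nil := by
        rw [SimpleGraph.Walk.nil_iff_length_eq, hp]; omega
      refine ⟨p.snd, fun _ => ⟨SimpleGraph.Walk.adj_snd hnil, ?_⟩⟩
      have h1 := SimpleGraph.dist_le p.tail
      have h2 := SimpleGraph.Walk.length_tail_add_one hnil
      omega
  choose g hg using key
  have hcard : (({root} : Finset W)ᶜ).card ≤ F.card := by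
    apply Finset.card_le_card_of_injOn (fun v => s(v, g v))
    · intro v hv
      have hv' : v ≠ root := by simpa using hv
      exact hF _ _ (hg v hv').1
    · intro a ha b hb hab
      have ha' : a ≠ root := by simpa using ha
      have hb' : b ≠ root := by simpa using hb
      have h1 := (hg a ha').2
      have h2 := (hg b hb').2
      rw [Sym2.eq_iff] at hab
      rcases hab with ⟨h, -⟩ | ⟨hab1, hab2⟩
      · exact h
      · have hA : H.dist a root < H.dist b root := by rw [hab1]; exact h2
        have hB : H.dist b root < H.dist a root := by rw [← hab2]; exact h1
        omega
  have hle : Fintype.card W - 1 ≤ F.card := by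
    simpa [Finset.card_compl] using hcard
  have hpos : 0 < Fintype.card W := Fintype.card_pos_iff.mpr ⟨root⟩
  omega

theorem connected_pseudoachromatic_index_le_floor_max_min
    (n k : ℕ) (hn : 8 ≤ n)
    (c : Sym2 (Fin n) → Fin k)
    (hcomplete : IsCompleteEdgeColoring (⊤ : SimpleGraph (Fin n)) c)
    (hconn : IsConnectedEdgeColoring (⊤ : SimpleGraph (Fin n)) c)
    (M : ℝ)
    (hM : IsGreatest {y : ℝ | ∃ x : ℕ, 0 < x ∧
      y = min ((n * (n - 1) : ℝ) / (2 * x)) ((x + 1) * ((n : ℝ) - x - 1 / 2))} M) :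
    (k : ℤ) ≤ ⌊M⌋ := by
  classical
  have hnR : (8 : ℝ) ≤ (n : ℝ) := by exact_mod_cast hn
  rcases Nat.eq_zero_or_pos k with hk0 | hk
  · -- trivial case k = 0
    have hmem : min ((n * (n - 1) : ℝ) / (2 * ((1 : ℕ) : ℝ)))
        ((((1 : ℕ) : ℝ) + 1) * ((n : ℝ) - ((1 : ℕ) : ℝ) - 1 / 2)) ∈
        {y : ℝ | ∃ x : ℕ, 0 < x ∧
          y = min ((n * (n - 1) : ℝ) / (2 * x)) ((x + 1) * ((n : ℝ) - x - 1 / 2))} :=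
      ⟨1, Nat.one_pos, rfl⟩
    have hle := hM.2 hmem
    rw [Int.le_floor]
    have h0 : ((k : ℤ) : ℝ) = 0 := by rw [hk0]; simp
    rw [h0]
    refine le_trans (le_min ?_ ?_) hle
    · apply div_nonneg
      · nlinarith
      · norm_num
    · push_cast
      nlinarith
  -- main case
  set E : Fin k → Finset (Sym2 (Fin n)) :=
    fun i => (⊤ : SimpleGraph (Fin n)).edgeFinset.filter (fun e => c e = i) with hE
  have hEmem : ∀ (j : Fin k) (a b : Fin n), s(a, b) ∈ E j ↔ a ≠ b ∧ c s(a, b) = j := by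
    intro j a b
    simp [hE, SimpleGraph.mem_edgeFinset, SimpleGraph.mem_edgeSet]
  have hEne : ∀ i, (E i).Nonempty := by
    intro i
    obtain ⟨e, he, hce⟩ := hcomplete.1 i
    exact ⟨e, Finset.mem_filter.mpr ⟨SimpleGraph.mem_edgeFinset.mpr he, hce⟩⟩
  haveI : Nonempty (Fin k) := ⟨⟨0, hk⟩⟩
  obtain ⟨i₀, -, hmin⟩ := Finset.exists_min_image (Finset.univ : Finset (Fin k))
    (fun i => (E i).card) ⟨Classical.arbitrary _, Finset.mem_univ _⟩
  set x := (E i₀).card with hx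
  have hminx : ∀ j : Fin k, x ≤ (E j).card := fun j => hmin j (Finset.mem_univ j)
  have hx1 : 1 ≤ x := Finset.card_pos.mpr (hEne i₀)
  set S : Finset (Fin n) :=
    Finset.univ.filter (fun v : Fin n => ∃ w, v ≠ w ∧ c s(v, w) = i₀) with hS
  have hSmem : ∀ v : Fin n, v ∈ S ↔ ∃ w, v ≠ w ∧ c s(v, w) = i₀ := by
    intro v; simp [hS]
  have hES : ∀ a b : Fin n, a ≠ b → c s(a, b) = i₀ → a ∈ S ∧ b ∈ S := by
    intro a b hab hc'
    refine ⟨(hSmem a).mpr ⟨b, hab, hc'⟩, (hSmem b).mpr ⟨a, hab.symm, ?_⟩⟩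
    rw [Sym2.eq_swap]; exact hc'
  set s := S.card with hscard
  have hsn : s ≤ n := by
    have := Finset.card_le_univ S
    simpa using this
  -- 2 ≤ s
  have hs2 : 2 ≤ s := by
    obtain ⟨e, he⟩ := hEne i₀
    obtain ⟨a, b, rfl⟩ := sym2_exists_eq_mk e
    rw [hEmem] at he
    obtain ⟨hab, hcol⟩ := he
    have h := hES a b hab hcol
    exact Finset.one_lt_card.mpr ⟨a, h.1, b, h.2, hab⟩
  -- vertex set of the subgraph of color i₀ is S
  have hverts : ∀ (j : Fin k) (v : Fin n),
      v ∈ (colorClassSubgraph (⊤ : SimpleGraph (Fin n)) c j).verts ↔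
        ∃ w, v ≠ w ∧ c s(v, w) = j := by
    intro j v
    show (∃ w, (⊤ : SimpleGraph (Fin n)).Adj v w ∧ c s(v, w) = j) ↔ _
    constructor
    · rintro ⟨w, hadj, hcw⟩
      exact ⟨w, hadj.ne, hcw⟩
    · rintro ⟨w, hne, hcw⟩
      exact ⟨w, by simpa using hne, hcw⟩
  -- s ≤ x + 1 via connectivity of the color class i₀
  have hsx : s ≤ x + 1 := by
    set H₀ := colorClassSubgraph (⊤ : SimpleGraph (Fin n)) c i₀ with hH₀
    haveI : Fintype ↥H₀.verts := Fintype.ofFinite _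
    set F : Finset (Sym2 ↥H₀.verts) :=
      Finset.univ.filter (fun e => Sym2.map (Subtype.val) e ∈ E i₀) with hF
    have hcard1 : Fintype.card ↥H₀.verts ≤ F.card + 1 := by
      apply connected_card_vert_le (hconn i₀).coe
      intro a b hab
      rw [SimpleGraph.Subgraph.coe_adj] at hab
      obtain ⟨hadj, hcol⟩ : (⊤ : SimpleGraph (Fin n)).Adj (a : Fin n) b ∧ c s((a : Fin n), b) = i₀ := hab
      refine Finset.mem_filter.mpr ⟨Finset.mem_univ _, ?_⟩
      rw [Sym2.map_pair_eq]
      exact (hEmem i₀ _ _).mpr ⟨hadj.ne, hcol⟩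
    have hcard2 : F.card ≤ x := by
      rw [hx]
      calc F.card = (F.image (Sym2.map (Subtype.val : ↥H₀.verts → Fin n))).card :=
            (Finset.card_image_of_injective _ (Sym2.map.injective Subtype.val_injective)).symm
        _ ≤ (E i₀).card := by
            apply Finset.card_le_card
            intro e he
            obtain ⟨e', he', rfl⟩ := Finset.mem_image.mp he
            exact (Finset.mem_filter.mp he').2
    have hcard3 : Fintype.card ↥H₀.verts = s := by
      rw [hscard, ← Fintype.card_coe S]
      apply Fintype.card_congr
      apply Equiv.subtypeEquivRight
      intro v
      rw [hverts i₀ v, hSmem v]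
    omega
  -- the internal edges
  set I : Finset (Sym2 (Fin n)) := (⊤ : SimpleGraph (Fin n)).edgeFinset ∩ S.sym2 with hI
  have hIcard : 2 * I.card ≤ s * (s - 1) := by
    have hsub : I ∪ S.image Sym2.diag ⊆ S.sym2 := by
      apply Finset.union_subset
      · exact Finset.inter_subset_right
      · intro e he
        obtain ⟨a, ha, rfl⟩ := Finset.mem_image.mp he
        exact Finset.mk_mem_sym2_iff.mpr ⟨ha, ha⟩
    have hdisj : Disjoint I (S.image Sym2.diag) := by
      rw [Finset.disjoint_left]
      intro e heI heD
      obtain ⟨a, -, rfl⟩ := Finset.mem_image.mp heD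
      have hnd : ¬ (Sym2.diag a).IsDiag :=
        SimpleGraph.not_isDiag_of_mem_edgeSet _
          (SimpleGraph.mem_edgeFinset.mp (Finset.mem_inter.mp heI).1)
      exact hnd (Sym2.diag_isDiag a)
    have hcards := Finset.card_le_card hsub
    rw [Finset.card_union_of_disjoint hdisj,
      Finset.card_image_of_injective _ Sym2.diag_injective, Finset.card_sym2,
      ← hscard] at hcards
    have hch : (s + 1).choose 2 = (s + 1) * s / 2 := by
      rw [Nat.choose_two_right]; simp
    rw [hch] at hcards
    have h3 : (s + 1) * s = s * (s - 1) + 2 * s := by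
      obtain ⟨t, ht⟩ : ∃ t, s = t + 1 := ⟨s - 1, by omega⟩
      rw [ht]
      simp only [Nat.add_sub_cancel]
      ring
    have h2 : ((s + 1) * s / 2) * 2 ≤ (s + 1) * s := Nat.div_mul_le_self _ 2
    set X := (s + 1) * s with hX
    set Y := s * (s - 1) with hY
    omega
  -- the classes fully inside S
  set A : Finset (Fin k) := Finset.univ.filter (fun j : Fin k => E j ⊆ I) with hA
  set B : Finset (Fin k) := Finset.univ.filter (fun j : Fin k => ¬ E j ⊆ I) with hB
  have hksplit : A.card + B.card = k := by
    rw [hA, hB, Finset.card_filter_add_card_filter_not]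
    simp
  have hAx : A.card * x ≤ I.card := by
    have h1 : A.card • x ≤ ∑ j ∈ A, (E j).card :=
      Finset.card_nsmul_le_sum A _ x (fun j _ => hminx j)
    have h2 : ∑ j ∈ A, (E j).card = (A.biUnion E).card := by
      rw [Finset.card_biUnion]
      intro j _ j' _ hne
      rw [Function.onFun, Finset.disjoint_left]
      intro e he he'
      exact hne (by rw [← (Finset.mem_filter.mp he).2, (Finset.mem_filter.mp he').2])
    have h3 : A.biUnion E ⊆ I := by
      apply Finset.biUnion_subset.mpr
      intro j hj
      exact (Finset.mem_filter.mp hj).2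
    calc A.card * x = A.card • x := by rw [smul_eq_mul]
      _ ≤ ∑ j ∈ A, (E j).card := h1
      _ = (A.biUnion E).card := h2
      _ ≤ I.card := Finset.card_le_card h3
  have hAs : 2 * A.card ≤ s := by
    have h4 : 2 * (A.card * x) ≤ s * (s - 1) :=
      le_trans (Nat.mul_le_mul_left 2 hAx) hIcard
    have h5 : s * (s - 1) ≤ s * x := Nat.mul_le_mul_left s (by omega)
    have h6 : (2 * A.card) * x ≤ s * x := by
      calc (2 * A.card) * x = 2 * (A.card * x) := by ring
        _ ≤ s * x := le_trans h4 h5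
    exact Nat.le_of_mul_le_mul_right h6 (by omega)
  -- the classes with a crossing edge
  have hBex : ∀ j : Fin k, ∃ p : Fin n × Fin n,
      j ∈ B → p.1 ∈ S ∧ p.2 ∉ S ∧ p.1 ≠ p.2 ∧ c s(p.1, p.2) = j := by
    intro j
    by_cases hj : j ∈ B
    swap
    · exact ⟨(⟨0, by omega⟩, ⟨0, by omega⟩), fun h => absurd h hj⟩
    have hnsub : ¬ E j ⊆ I := (Finset.mem_filter.mp hj).2
    obtain ⟨e, heE, heI⟩ := Finset.not_subset.mp hnsub
    obtain ⟨a, b, rfl⟩ := sym2_exists_eq_mk e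
    rw [hEmem] at heE
    obtain ⟨hab, hcol⟩ := heE
    have hout : a ∉ S ∨ b ∉ S := by
      by_contra h
      push_neg at h
      exact heI (Finset.mem_inter.mpr
        ⟨SimpleGraph.mem_edgeFinset.mpr ((⊤ : SimpleGraph (Fin n)).mem_edgeSet.mpr
            (by simpa using hab)),
          Finset.mk_mem_sym2_iff.mpr ⟨h.1, h.2⟩⟩)
    have hji : i₀ ≠ j := by
      rintro rfl
      obtain ⟨h1, h2⟩ := hES a b hab hcol
      rcases hout with h | h
      · exact h h1
      · exact h h2
    have main : ∀ a' b' : Fin n, a' ≠ b' → c s(a', b') = j → b' ∉ S →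
        ∃ p : Fin n × Fin n, j ∈ B → p.1 ∈ S ∧ p.2 ∉ S ∧ p.1 ≠ p.2 ∧ c s(p.1, p.2) = j := by
      intro a' b' hne hcol' hbS
      obtain ⟨u, v', w', huv, huw, hcuv, hcuw⟩ := hcomplete.2 i₀ j hji
      have huS : u ∈ S := (hSmem u).mpr ⟨v', huv.ne, hcuv⟩
      have huV : u ∈ (colorClassSubgraph (⊤ : SimpleGraph (Fin n)) c j).verts :=
        (show ∃ w, (⊤ : SimpleGraph (Fin n)).Adj u w ∧ c s(u, w) = j from ⟨w', huw, hcuw⟩)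
      have hbV : b' ∈ (colorClassSubgraph (⊤ : SimpleGraph (Fin n)) c j).verts := by
        show ∃ w, (⊤ : SimpleGraph (Fin n)).Adj b' w ∧ c s(b', w) = j
        refine ⟨a', by simpa using hne.symm, ?_⟩
        rw [Sym2.eq_swap]; exact hcol'
      obtain ⟨pw⟩ := (hconn j).coe.preconnected ⟨u, huV⟩ ⟨b', hbV⟩
      obtain ⟨a₁, b₁, hadj, haS, hbS'⟩ := exists_cross_edge'
        {z : ↥(colorClassSubgraph (⊤ : SimpleGraph (Fin n)) c j).verts | (z : Fin n) ∈ S}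
        pw huS hbS
      rw [SimpleGraph.Subgraph.coe_adj] at hadj
      replace hadj : (⊤ : SimpleGraph (Fin n)).Adj (a₁ : Fin n) b₁ ∧ c s((a₁ : Fin n), b₁) = j := hadj
      exact ⟨((a₁ : Fin n), (b₁ : Fin n)), fun _ => ⟨haS, hbS', hadj.1.ne, hadj.2⟩⟩
    rcases hout with h | h
    · refine main b a hab.symm ?_ h
      rw [Sym2.eq_swap]; exact hcol
    · exact main a b hab hcol h
  choose pB hpB using hBex
  have hBcard : B.card ≤ s * (n - s) := by
    have hinj : B.card ≤ (S ×ˢ Sᶜ).card := by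
      apply Finset.card_le_card_of_injOn pB
      · intro j hj
        obtain ⟨h1, h2, h3, h4⟩ := hpB j hj
        exact Finset.mem_product.mpr ⟨h1, Finset.mem_compl.mpr h2⟩
      · intro j hj j' hj' heq
        have h4 := (hpB j (Finset.mem_coe.mp hj)).2.2.2
        have h4' := (hpB j' (Finset.mem_coe.mp hj')).2.2.2
        rw [← h4, ← h4', heq]
    calc B.card ≤ (S ×ˢ Sᶜ).card := hinj
      _ = s * (n - s) := by
          rw [Finset.card_product, Finset.card_compl, ← hscard, Fintype.card_fin]
  -- total edge count
  have htot : k * x ≤ n.choose 2 := by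
    have h1 : (Finset.univ : Finset (Fin k)).card • x ≤ ∑ j, (E j).card :=
      Finset.card_nsmul_le_sum _ _ _ (fun j _ => hminx j)
    have h2 : (⊤ : SimpleGraph (Fin n)).edgeFinset.card = ∑ j, (E j).card :=
      Finset.card_eq_sum_card_fiberwise (fun e _ => Finset.mem_univ (c e))
    rw [SimpleGraph.card_edgeFinset_top_eq_card_choose_two, Fintype.card_fin] at h2
    have h3 := le_trans h1 (le_of_eq h2.symm)
    simpa [smul_eq_mul] using h3
  -- putting it together
  set x' : ℕ := s - 1 with hx'
  have hx'pos : 0 < x' := by omega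
  have hmem : min ((n * (n - 1) : ℝ) / (2 * (x' : ℝ)))
      (((x' : ℝ) + 1) * ((n : ℝ) - (x' : ℝ) - 1 / 2)) ∈
      {y : ℝ | ∃ x : ℕ, 0 < x ∧
        y = min ((n * (n - 1) : ℝ) / (2 * x)) ((x + 1) * ((n : ℝ) - x - 1 / 2))} :=
    ⟨x', hx'pos, rfl⟩
  have hle := hM.2 hmem
  rw [Int.le_floor]
  have hkR : ((k : ℤ) : ℝ) = (k : ℝ) := by push_cast; ring
  rw [hkR]
  refine le_trans (le_min ?_ ?_) hle
  · -- k ≤ f(x')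
    have h : k * x' ≤ n.choose 2 := le_trans (Nat.mul_le_mul_left k (by omega)) htot
    have hR : (k : ℝ) * (x' : ℝ) ≤ (n : ℝ) * ((n : ℝ) - 1) / 2 := by
      calc (k : ℝ) * (x' : ℝ) = ((k * x' : ℕ) : ℝ) := by push_cast; ring
        _ ≤ ((n.choose 2 : ℕ) : ℝ) := Nat.cast_le.mpr h
        _ = (n : ℝ) * ((n : ℝ) - 1) / 2 := by rw [Nat.cast_choose_two]
    have hx'R : (1 : ℝ) ≤ (x' : ℝ) := by exact_mod_cast hx'pos
    rw [le_div_iff₀ (by linarith)]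
    linarith
  · -- k ≤ g(x')
    have hnat : 2 * k ≤ s + 2 * (s * (n - s)) := by
      set P := s * (n - s) with hP
      omega
    have hcast : ((n - s : ℕ) : ℝ) = (n : ℝ) - (s : ℝ) := by
      rw [Nat.cast_sub hsn]
    have hRR : 2 * (k : ℝ) ≤ (s : ℝ) + 2 * ((s : ℝ) * ((n : ℝ) - (s : ℝ))) := by
      have := (Nat.cast_le (α := ℝ)).mpr hnat
      push_cast [hcast] at this
      linarith
    have hx'cast : (x' : ℝ) = (s : ℝ) - 1 := by
      rw [hx', Nat.cast_sub (by omega : 1 ≤ s)]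
      norm_num
    rw [hx'cast]
    nlinarith [hRR]
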